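/- Let G be a finite simple graph with an acyclic proper vertex k-coloring c_V. Then there exists an edge coloring c_E of G with the same k colors such that: (1) every edge colored a has at least one endpoint v with c_V(v) = a; and (2) for every vertex v and every color a ≠ c_V(v), the vertex v is incident to at most one edge of color a. In particular, each color class of c_E is a star forest in which the center of every star with at least two edges has that color under c_V. -/

import Mathlib

open Finset
open SimpleGraph
open scoped Classical

private lemma stmt9_core {V : Type*} {H : SimpleGraph V} (h : H.IsAcyclic) {u v r : V}
    (huv : H.Adj u v) (p : H.Path u r) (q : H.Path v r) :
    Xor' (0 < p.1.length ∧ p.1.getVert 1 = v) (0 < q.1.length ∧ q.1.getVert 1 = u) := by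
  have key : Xor' (p.1 = Walk.cons huv q.1) (q.1 = Walk.cons huv.symm p.1) := by
    have hnotboth : ¬ (p.1 = Walk.cons huv q.1 ∧ q.1 = Walk.cons huv.symm p.1) := by
      rintro ⟨h1, h2⟩
      have l1 := congrArg Walk.length h1
      have l2 := congrArg Walk.length h2
      rw [Walk.length_cons] at l1 l2
      omega
    have hone : p.1 = Walk.cons huv q.1 ∨ q.1 = Walk.cons huv.symm p.1 := by
      by_cases hu : u ∈ q.1.support
      · by_cases hv : v ∈ p.1.support
        · exfalso
          have e1 : q = ⟨p.1.dropUntil v hv, p.2.dropUntil hv⟩ := h.path_unique _ _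
          have e2 : p = ⟨q.1.dropUntil u hu, q.2.dropUntil hu⟩ := h.path_unique _ _
          have l1 : q.1.length = (p.1.dropUntil v hv).length := by rw [e1]
          have l2 : p.1.length = (q.1.dropUntil u hu).length := by rw [e2]
          have s1 := congrArg Walk.length (p.1.take_spec hv)
          have s2 := congrArg Walk.length (q.1.take_spec hu)
          rw [Walk.length_append] at s1 s2
          have t1 : (p.1.takeUntil v hv).length ≠ 0 := fun h0 =>
            huv.ne (Walk.eq_of_length_eq_zero h0)
          have t2 : (q.1.takeUntil u hu).length ≠ 0 := fun h0 =>
            huv.ne.symm (Walk.eq_of_length_eq_zero h0)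
          omega
        · right
          have e1 : q = ⟨Walk.cons huv.symm p.1, p.2.cons hv⟩ := h.path_unique _ _
          rw [e1]
      · left
        have e1 : p = ⟨Walk.cons huv q.1, q.2.cons hu⟩ := h.path_unique _ _
        rw [e1]
    rcases hone with h1 | h1
    · exact Or.inl ⟨h1, fun h2 => hnotboth ⟨h1, h2⟩⟩
    · exact Or.inr ⟨h1, fun h2 => hnotboth ⟨h2, h1⟩⟩
  rcases key with ⟨h1, h2⟩ | ⟨h1, h2⟩
  · refine Or.inl ⟨⟨by rw [h1, Walk.length_cons]; omega, by rw [h1]; exact Walk.getVert_zero _⟩, ?_⟩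
    rintro ⟨hl, hg⟩
    have hu : u ∈ q.1.support :=
      Walk.mem_support_iff_exists_getVert.mpr ⟨1, hg, by omega⟩
    have := p.2
    rw [h1, Walk.cons_isPath_iff] at this
    exact this.2 hu
  · refine Or.inr ⟨⟨by rw [h1, Walk.length_cons]; omega, by rw [h1]; exact Walk.getVert_zero _⟩, ?_⟩
    rintro ⟨hl, hg⟩
    have hv : v ∈ p.1.support :=
      Walk.mem_support_iff_exists_getVert.mpr ⟨1, hg, by omega⟩
    have := q.2
    rw [h1, Walk.cons_isPath_iff] at this
    exact this.2 hv

private lemma stmt9_orient {V : Type*} (H : SimpleGraph V) (h : H.IsAcyclic) :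
    ∃ N : V → Option V, ∀ u v, H.Adj u v → Xor' (N u = some v) (N v = some u) := by
  classical
  have hre : ∀ v, H.Reachable v ((H.connectedComponentMk v).out) := fun v =>
    (ConnectedComponent.exact (Quot.out_eq (H.connectedComponentMk v))).symm
  let q : ∀ v, H.Path v ((H.connectedComponentMk v).out) := fun v =>
    (Classical.choice (hre v) : H.Walk v _).toPath
  refine ⟨fun v => if 0 < (q v).1.length then some ((q v).1.getVert 1) else none, ?_⟩
  intro u v huv
  have hr : (H.connectedComponentMk v).out = (H.connectedComponentMk u).out := by
    rw [ConnectedComponent.connectedComponentMk_eq_of_adj huv.symm]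
  let q' : H.Path v ((H.connectedComponentMk u).out) :=
    ⟨(q v).1.copy rfl hr, by rw [Walk.isPath_copy]; exact (q v).2⟩
  have hx := stmt9_core h huv (q u) q'
  have e1 : ((if 0 < (q u).1.length then some ((q u).1.getVert 1) else none) = some v)
      = (0 < (q u).1.length ∧ (q u).1.getVert 1 = v) := by
    split_ifs with h0 <;> simp [h0]
  have e2 : ((if 0 < (q v).1.length then some ((q v).1.getVert 1) else none) = some u)
      = (0 < (q v).1.length ∧ (q v).1.getVert 1 = u) := by
    split_ifs with h0 <;> simp [h0]
  have e3 : q'.1.length = (q v).1.length := by simp only [q', Walk.length_copy]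
  have e4 : q'.1.getVert 1 = (q v).1.getVert 1 := by simp only [q', Walk.getVert_copy]
  simp only [e1, e2]
  rwa [e3, e4] at hx

/-- `cV` is an acyclic proper vertex coloring of `G` with `k` colors: adjacent
vertices get distinct colors, and the subgraph induced by the union of any two
color classes contains no cycle. -/
def IsAcyclicProperColoring {V : Type*} (G : SimpleGraph V) {k : ℕ}
    (cV : V → Fin k) : Prop :=
  (∀ u v, G.Adj u v → cV u ≠ cV v) ∧
  ∀ a b : Fin k,
    (SimpleGraph.fromRel fun u v =>
      G.Adj u v ∧ (cV u = a ∨ cV u = b) ∧ (cV v = a ∨ cV v = b)).IsAcyclic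

/-- Given an acyclic proper vertex `k`-coloring `cV` of a finite simple
graph `G`, there is an edge coloring `cE` with the same `k` colors such that:
(1) every edge colored `a` has an endpoint of vertex color `a`; and
(2) every vertex `v` is incident to at most one edge of each color `a ≠ cV v`.
(Hence each color class of `cE` is a star forest whose nontrivial stars are centered
at vertices of that vertex color.) -/
theorem stmt9 {V : Type*} [Fintype V] (G : SimpleGraph V) (k : ℕ)
    (cV : V → Fin k) (hcV : IsAcyclicProperColoring G cV) :
    ∃ cE : Sym2 V → Fin k,
      (∀ u v, G.Adj u v → cE s(u, v) = cV u ∨ cE s(u, v) = cV v) ∧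
      (∀ v (a : Fin k), a ≠ cV v →
        (univ.filter fun u => G.Adj v u ∧ cE s(v, u) = a).card ≤ 1) := by
  classical
  obtain ⟨hproper, hacyc⟩ := hcV
  set H : Sym2 (Fin k) → SimpleGraph V := fun p =>
    SimpleGraph.fromRel fun u v => G.Adj u v ∧ cV u ∈ p ∧ cV v ∈ p with hHdef
  have hH : ∀ p, (H p).IsAcyclic := by
    intro p
    induction p using Sym2.ind with
    | _ a b =>
      have he : H s(a, b) = SimpleGraph.fromRel fun u v =>
          G.Adj u v ∧ (cV u = a ∨ cV u = b) ∧ (cV v = a ∨ cV v = b) := by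
        simp only [hHdef]
        congr 1
        ext u v
        simp [Sym2.mem_iff]
      rw [he]
      exact hacyc a b
  choose N hN using fun p => stmt9_orient (H p) (hH p)
  set g : V → V → Fin k := fun u v =>
    if N s(cV u, cV v) u = some v ∧ ¬ N s(cV u, cV v) v = some u then cV v
    else if N s(cV u, cV v) v = some u ∧ ¬ N s(cV u, cV v) u = some v then cV u
    else max (cV u) (cV v) with hgdef
  have hsym : ∀ u v, g u v = g v u := by
    intro u v
    simp only [hgdef]
    rw [show s(cV v, cV u) = s(cV u, cV v) from Sym2.eq_swap]
    by_cases c1 : N s(cV u, cV v) u = some v <;>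
      by_cases c2 : N s(cV u, cV v) v = some u <;>
      simp [c1, c2, max_comm]
  refine ⟨Sym2.lift ⟨g, hsym⟩, ?_, ?_⟩
  · intro u v huv
    have hlift : Sym2.lift ⟨g, hsym⟩ s(u, v) = g u v := Sym2.lift_mk _ _ _
    rw [hlift, hgdef]
    dsimp only
    split_ifs with h1 h2
    · exact Or.inr rfl
    · exact Or.inl rfl
    · rcases max_choice (cV u) (cV v) with h | h <;> simp [h]
  · intro v a ha
    rw [Finset.card_le_one]
    have hmem : ∀ u, G.Adj v u → (H s(cV v, cV u)).Adj v u := by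
      intro u huv
      rw [hHdef, SimpleGraph.fromRel_adj]
      exact ⟨huv.ne, Or.inl ⟨huv, Sym2.mem_mk_left _ _, Sym2.mem_mk_right _ _⟩⟩
    have key : ∀ u, G.Adj v u → Sym2.lift ⟨g, hsym⟩ s(v, u) = a →
        N s(cV v, a) v = some u := by
      intro u huv hval
      have hlift : Sym2.lift ⟨g, hsym⟩ s(v, u) = g v u := Sym2.lift_mk _ _ _
      rw [hlift] at hval
      rcases hN _ v u (hmem u huv) with ⟨h1, h2⟩ | ⟨h1, h2⟩
      · -- N p v = some u, g v u = cV u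
        have hg : g v u = cV u := by simp [hgdef, h1, h2]
        rw [hg] at hval
        rw [show s(cV v, a) = s(cV v, cV u) from by rw [hval]]
        exact h1
      · -- N p u = some v, g v u = cV v, contradiction with a ≠ cV v
        have hg : g v u = cV v := by simp [hgdef, h1, h2]
        rw [hg] at hval
        exact absurd hval.symm ha
    intro u hu u' hu'
    simp only [Finset.mem_filter] at hu hu'
    have k1 := key u hu.2.1 hu.2.2
    have k2 := key u' hu'.2.1 hu'.2.2
    rw [k1] at k2
    exact Option.some_inj.mp k2
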